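/- Let d be even, X and Z the generalized Pauli operators on ℂ^d, and P the parity operator. For (q,p) ∈ ℤ_{2d} × ℤ_{2d}, the operators F(q,p) = (1/(4d²)) X^q Z^p P e^{iπqp/d} are Hermitian, and the family {F(q,p)} spans Herm(ℂ^d), hence is a frame; since |ℤ_{2d} × ℤ_{2d}| = 4d² > d², this frame is not a basis and its dual frame is not unique. -/

import Mathlib

noncomputable section

open Matrix

/-- The shift (generalized Pauli X) operator: `X φ_k = φ_{k+1}`. -/
def pauliX (d : ℕ) [NeZero d] : Matrix (ZMod d) (ZMod d) ℂ :=
  Matrix.of fun k l => if k = l + 1 then 1 else 0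

/-- The clock (generalized Pauli Z) operator: `Z φ_k = ω^k φ_k`, `ω = e^{2πi/d}`. -/
def pauliZ (d : ℕ) [NeZero d] : Matrix (ZMod d) (ZMod d) ℂ :=
  Matrix.diagonal fun k => Complex.exp (2 * Real.pi * Complex.I * k.val / d)

/-- The parity operator: `P φ_k = φ_{-k}`. -/
def parityP (d : ℕ) [NeZero d] : Matrix (ZMod d) (ZMod d) ℂ :=
  Matrix.of fun k l => if k = -l then 1 else 0

/-- Leonhardt's frame `F(q,p) = (1/(4d²)) X^q Z^p P e^{iπqp/d}` for `(q,p) ∈ ℤ_{2d} × ℤ_{2d}`. -/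
def leonhardtF (d : ℕ) [NeZero d] (q p : ZMod (2 * d)) : Matrix (ZMod d) (ZMod d) ℂ :=
  ((4 * (d : ℂ) ^ 2)⁻¹ * Complex.exp (Real.pi * Complex.I * q.val * p.val / d)) •
    (pauliX d ^ q.val * pauliZ d ^ p.val * parityP d)

variable (d : ℕ) [NeZero d]

lemma pauliX_apply (k l : ZMod d) : pauliX d k l = if k = l + 1 then 1 else 0 := rfl

lemma pauliX_pow_apply (n : ℕ) (k l : ZMod d) :
    (pauliX d ^ n) k l = if k = l + n then 1 else 0 := by
  induction n generalizing k l with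
  | zero => simp [Matrix.one_apply, eq_comm]
  | succ n ih =>
    rw [pow_succ, Matrix.mul_apply]
    simp only [pauliX_apply, mul_ite, mul_one, mul_zero]
    rw [Finset.sum_ite_eq' Finset.univ (l + 1) (fun m => (pauliX d ^ n) k m)]
    rw [if_pos (Finset.mem_univ _), ih]
    congr 2
    push_cast
    ring

lemma pauliZ_pow_apply (n : ℕ) (k l : ZMod d) :
    (pauliZ d ^ n) k l =
      if k = l then Complex.exp (Real.pi * Complex.I * (2 * (k.val * n)) / d) else 0 := by
  rw [pauliZ, Matrix.diagonal_pow, Matrix.diagonal_apply]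
  congr 1
  rw [Pi.pow_apply, ← Complex.exp_nat_mul]
  congr 1
  push_cast
  ring

lemma parityP_apply (k l : ZMod d) : parityP d k l = if k = -l then 1 else 0 := rfl

lemma ite_comm_aux (q p : ℕ) (k l m : ZMod d) :
    (if k = m + (q:ZMod d) then if m = -l then
        Complex.exp (Real.pi * Complex.I * (2 * (m.val * p)) / d) else 0 else 0) =
      (if m = -l then if k = -l + (q:ZMod d) then
        Complex.exp (Real.pi * Complex.I * (2 * ((-l).val * p)) / d) else 0 else 0) := by
  by_cases h : m = -l
  · subst h; simp
  · simp [h]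

lemma M_apply (q p : ℕ) (k l : ZMod d) :
    (pauliX d ^ q * pauliZ d ^ p * parityP d) k l =
      if k = -l + q then Complex.exp (Real.pi * Complex.I * (2 * ((-l).val * p)) / d) else 0 := by
  rw [Matrix.mul_apply]
  simp only [parityP_apply, mul_ite, mul_one, mul_zero]
  rw [Finset.sum_ite_eq' Finset.univ (-l) (fun m => (pauliX d ^ q * pauliZ d ^ p) k m),
    if_pos (Finset.mem_univ _), Matrix.mul_apply]
  simp only [pauliX_pow_apply, pauliZ_pow_apply, boole_mul]
  rw [Finset.sum_congr rfl (fun m _ => ite_comm_aux d q p k l m), Finset.sum_ite_eq'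
    Finset.univ (-l) (fun m => if k = -l + (q:ZMod d) then
      Complex.exp (Real.pi * Complex.I * (2 * ((-l).val * p)) / d) else 0),
    if_pos (Finset.mem_univ _)]

lemma F_apply (q p : ZMod (2 * d)) (k l : ZMod d) :
    leonhardtF d q p k l =
      if k = -l + (q.val : ZMod d) then
        (4 * (d : ℂ) ^ 2)⁻¹ *
          Complex.exp (Real.pi * Complex.I * (q.val * p.val + 2 * ((-l).val * p.val)) / d)
      else 0 := by
  rw [leonhardtF, Matrix.smul_apply, M_apply, smul_eq_mul]
  rw [mul_ite, mul_zero]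
  congr 1
  rw [mul_assoc, ← Complex.exp_add]
  congr 1
  push_cast
  ring

lemma hd0 : (d : ℂ) ≠ 0 := Nat.cast_ne_zero.mpr (NeZero.ne d)

lemma exp_pi_congr {a b : ℤ} (h : (2 * d : ℤ) ∣ (a - b)) :
    Complex.exp (Real.pi * Complex.I * a / d) = Complex.exp (Real.pi * Complex.I * b / d) := by
  obtain ⟨m, hm⟩ := h
  have ha : (a : ℂ) = b + 2 * d * m := by
    have : a = b + 2 * d * m := by linarith
    exact_mod_cast congrArg (Int.cast : ℤ → ℂ) this
  rw [show (Real.pi * Complex.I * a / d : ℂ) = Real.pi * Complex.I * b / d + m * (2 * Real.pi * Complex.I) by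
    rw [ha]; field_simp [hd0 d]]
  rw [Complex.exp_add, Complex.exp_int_mul_two_pi_mul_I, mul_one]

lemma val_natCast_zmod (m : ZMod d) : ((m.val : ZMod d)) = m := by
  simp [ZMod.natCast_val, ZMod.cast_id]

lemma F_isHermitian (q p : ZMod (2 * d)) : (leonhardtF d q p).IsHermitian := by
  refine Matrix.ext fun k l => ?_
  rw [Matrix.conjTranspose_apply, F_apply, F_apply]
  have hiff : (l = -k + (q.val : ZMod d)) ↔ (k = -l + (q.val : ZMod d)) := by
    constructor <;> intro h <;> · rw [h]; ring
  by_cases h : k = -l + (q.val : ZMod d)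
  · rw [if_pos (hiff.mpr h), if_pos h]
    have hdvd : (d : ℤ) ∣ ((q.val : ℤ) + (-l).val + (-k).val) := by
      rw [← ZMod.intCast_zmod_eq_zero_iff_dvd]
      push_cast
      rw [val_natCast_zmod, val_natCast_zmod, h]
      ring
    obtain ⟨n, hn⟩ := hdvd
    have key : Complex.exp (-(Real.pi * Complex.I *
          ((q.val : ℂ) * p.val + 2 * ((-k).val * p.val)) / d)) =
        Complex.exp (Real.pi * Complex.I * ((q.val : ℂ) * p.val + 2 * ((-l).val * p.val)) / d) := by
      have h1 : Complex.exp (Real.pi * Complex.I *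
            ((-((q.val : ℤ) * p.val + 2 * ((-k).val * p.val)) : ℤ) : ℂ) / d) =
          Complex.exp (Real.pi * Complex.I *
            ((((q.val : ℤ) * p.val + 2 * ((-l).val * p.val)) : ℤ) : ℂ) / d) := by
        apply exp_pi_congr
        refine ⟨-(p.val * n), ?_⟩
        have : (q.val : ℤ) + (-l).val + (-k).val = d * n := hn
        nlinarith [this]
      push_cast at h1
      rw [← h1]; congr 1; ring
    rw [star_mul']
    rw [show star ((4 * (d:ℂ)^2)⁻¹) = (4 * (d:ℂ)^2)⁻¹ by
      simp [star_inv₀, ← Complex.ofReal_natCast]]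
    congr 1
    rw [Complex.star_def, ← Complex.exp_conj]
    rw [← key]
    congr 1
    simp only [map_div₀, _root_.map_mul, map_add, Complex.conj_I, map_natCast, map_ofNat,
      Complex.conj_ofReal]
    ring
  · rw [if_neg (fun hl => h (hiff.mp hl)), if_neg h, star_zero]

lemma sum_zmod_val (n : ℕ) [NeZero n] (f : ℕ → ℂ) :
    ∑ q : ZMod n, f q.val = ∑ i ∈ Finset.range n, f i := by
  refine Finset.sum_nbij' (fun q => q.val) (fun i => (i : ZMod n)) ?_ ?_ ?_ ?_ ?_
  · intro q _; exact Finset.mem_range.mpr (ZMod.val_lt q)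
  · intro i _; exact Finset.mem_univ _
  · intro q _; exact (ZMod.natCast_rightInverse q)
  · intro i hi; exact ZMod.val_cast_of_lt (Finset.mem_range.mp hi)
  · intro q _; rfl

lemma sum_exp_geom (T : ℕ) :
    ∑ p : ZMod (2 * d), Complex.exp (Real.pi * Complex.I * (2 * (T * p.val)) / d) =
      if (T : ZMod d) = 0 then (2 * d : ℂ) else 0 := by
  haveI : NeZero (2 * d) := ⟨by have := NeZero.ne d; omega⟩
  have hz : ∀ j : ℕ, Complex.exp (Real.pi * Complex.I * (2 * (T * j)) / d) =
      (Complex.exp (Real.pi * Complex.I * (2 * T) / d)) ^ j := by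
    intro j
    rw [← Complex.exp_nat_mul]
    congr 1
    push_cast
    ring
  set z := Complex.exp (Real.pi * Complex.I * (2 * T) / d) with hzdef
  calc ∑ p : ZMod (2 * d), Complex.exp (Real.pi * Complex.I * (2 * (T * p.val)) / d)
      = ∑ i ∈ Finset.range (2 * d), z ^ i := by
        rw [Finset.sum_congr rfl fun p _ => hz p.val]
        exact sum_zmod_val (2 * d) (fun j => z ^ j)
    _ = if (T : ZMod d) = 0 then (2 * d : ℂ) else 0 := by
        by_cases hT : (T : ZMod d) = 0
        · obtain ⟨m, hm⟩ := (ZMod.natCast_eq_zero_iff T d).mp hT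
          have hz1 : z = 1 := by
            rw [hzdef, show (Real.pi * Complex.I * (2 * T) / d : ℂ) = (m : ℤ) * (2 * Real.pi * Complex.I) by
              rw [show ((T:ℂ)) = (d : ℂ) * m by exact_mod_cast congrArg (Nat.cast : ℕ → ℂ) hm]
              have hd := hd0 d
              field_simp
              push_cast; ring]
            exact Complex.exp_int_mul_two_pi_mul_I m
          simp [hz1, hT]
        · have hzne : z ≠ 1 := by
            intro hz1
            obtain ⟨n, hn⟩ := Complex.exp_eq_one_iff.mp (hzdef ▸ hz1)
            have hpi : (Real.pi : ℂ) ≠ 0 := by exact_mod_cast Real.pi_ne_zero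
            have h2pi : (2 : ℂ) * Real.pi * Complex.I ≠ 0 := by
              simp [hpi, Complex.I_ne_zero]
            have hTd : (T : ℂ) = d * n := by
              have hd := hd0 d
              field_simp at hn
              apply mul_left_cancel₀ h2pi
              linear_combination (2 * Real.pi * Complex.I) * hn
            have hdvd : (d : ℤ) ∣ (T : ℤ) := ⟨n, by exact_mod_cast hTd⟩
            exact hT ((ZMod.natCast_eq_zero_iff T d).mpr
              (Int.natCast_dvd_natCast.mp hdvd))
          rw [geom_sum_eq hzne, if_neg hT]
          have hz2d : z ^ (2 * d) = 1 := by
            rw [hzdef, ← Complex.exp_nat_mul]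
            rw [show ((2 * d : ℕ) : ℂ) * (Real.pi * Complex.I * (2 * T) / d) =
                ((2 * T : ℤ) : ℂ) * (2 * Real.pi * Complex.I) by
              have hd := hd0 d
              push_cast; field_simp]
            exact Complex.exp_int_mul_two_pi_mul_I _
          rw [hz2d, sub_self, zero_div]

lemma trace_F_mul (q p : ZMod (2 * d)) (A : Matrix (ZMod d) (ZMod d) ℂ) :
    Matrix.trace (leonhardtF d q p * A) =
      ∑ m : ZMod d, (4 * (d : ℂ) ^ 2)⁻¹ *
        Complex.exp (Real.pi * Complex.I * (q.val * p.val + 2 * ((-m).val * p.val)) / d) *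
        A m (-m + (q.val : ZMod d)) := by
  rw [Matrix.trace]
  simp only [Matrix.diag_apply, Matrix.mul_apply]
  rw [Finset.sum_comm]
  refine Finset.sum_congr rfl fun m _ => ?_
  simp only [F_apply, ite_mul, zero_mul]
  rw [Finset.sum_ite_eq' Finset.univ (-m + (q.val : ZMod d))
    (fun j => (4 * (d : ℂ) ^ 2)⁻¹ *
      Complex.exp (Real.pi * Complex.I * (q.val * p.val + 2 * ((-m).val * p.val)) / d) * A m j),
    if_pos (Finset.mem_univ _)]

lemma innerSumF (q : ZMod (2 * d)) (A : Matrix (ZMod d) (ZMod d) ℂ) (k l : ZMod d) :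
    ∑ p : ZMod (2 * d), Matrix.trace (leonhardtF d q p * A) *
        ((4 * (d : ℂ) ^ 3) * leonhardtF d q p k l)
      = if k = -l + (q.val : ZMod d) then (2 : ℂ)⁻¹ * A k l else 0 := by
  by_cases h : k = -l + (q.val : ZMod d)
  · rw [if_pos h]
    have hstep : ∀ p : ZMod (2 * d),
        Matrix.trace (leonhardtF d q p * A) * ((4 * (d : ℂ) ^ 3) * leonhardtF d q p k l)
          = ∑ m : ZMod d, (4 * (d : ℂ) ^ 3 * ((4 * (d : ℂ) ^ 2)⁻¹) ^ 2 * A m (-m + (q.val : ZMod d)))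
              * Complex.exp (Real.pi * Complex.I *
                  (2 * (((q.val + (-m).val + (-l).val : ℕ) : ℂ) * p.val)) / d) := by
      intro p
      rw [trace_F_mul, F_apply, if_pos h, Finset.sum_mul]
      refine Finset.sum_congr rfl fun m _ => ?_
      have hexp : Complex.exp (Real.pi * Complex.I * (q.val * p.val + 2 * ((-m).val * p.val)) / d)
          * Complex.exp (Real.pi * Complex.I * (q.val * p.val + 2 * ((-l).val * p.val)) / d)
            = Complex.exp (Real.pi * Complex.I *
                (2 * (((q.val + (-m).val + (-l).val : ℕ) : ℂ) * p.val)) / d) := by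
        rw [← Complex.exp_add]
        congr 1
        push_cast
        ring
      calc (4 * (d : ℂ) ^ 2)⁻¹ *
            Complex.exp (Real.pi * Complex.I * (q.val * p.val + 2 * ((-m).val * p.val)) / d) *
            A m (-m + (q.val : ZMod d)) *
            ((4 * (d : ℂ) ^ 3) * ((4 * (d : ℂ) ^ 2)⁻¹ *
              Complex.exp (Real.pi * Complex.I * (q.val * p.val + 2 * ((-l).val * p.val)) / d)))
          = (4 * (d : ℂ) ^ 3 * ((4 * (d : ℂ) ^ 2)⁻¹) ^ 2 * A m (-m + (q.val : ZMod d)))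
              * (Complex.exp (Real.pi * Complex.I * (q.val * p.val + 2 * ((-m).val * p.val)) / d)
                * Complex.exp (Real.pi * Complex.I * (q.val * p.val + 2 * ((-l).val * p.val)) / d)) := by
                ring
        _ = _ := by rw [hexp]
    rw [Finset.sum_congr rfl fun p _ => hstep p, Finset.sum_comm]
    have hrow : ∀ m : ZMod d,
        (∑ p : ZMod (2 * d),
          (4 * (d : ℂ) ^ 3 * ((4 * (d : ℂ) ^ 2)⁻¹) ^ 2 * A m (-m + (q.val : ZMod d)))
            * Complex.exp (Real.pi * Complex.I *
                (2 * (((q.val + (-m).val + (-l).val : ℕ) : ℂ) * p.val)) / d))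
          = if m = k then (4 * (d : ℂ) ^ 3 * ((4 * (d : ℂ) ^ 2)⁻¹) ^ 2
              * A m (-m + (q.val : ZMod d))) * (2 * d) else 0 := by
      intro m
      rw [← Finset.mul_sum, sum_exp_geom]
      have hcond : (((q.val + (-m).val + (-l).val : ℕ) : ZMod d) = 0) ↔ m = k := by
        push_cast
        rw [val_natCast_zmod, val_natCast_zmod]
        constructor
        · intro hh
          rw [h]
          linear_combination -hh
        · intro hh
          rw [hh, h]
          ring
      by_cases hm : m = k
      · rw [if_pos (hcond.mpr hm), if_pos hm]
      · rw [if_neg (fun c => hm (hcond.mp c)), if_neg hm, mul_zero]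
    rw [Finset.sum_congr rfl fun m _ => hrow m,
      Finset.sum_ite_eq' Finset.univ k
        (fun m => (4 * (d : ℂ) ^ 3 * ((4 * (d : ℂ) ^ 2)⁻¹) ^ 2 * A m (-m + (q.val : ZMod d))) * (2 * d)),
      if_pos (Finset.mem_univ _)]
    have hl : -k + (q.val : ZMod d) = l := by rw [h]; ring
    rw [hl]
    have hd := hd0 d
    field_simp
    ring
  · rw [if_neg h]
    refine Finset.sum_eq_zero fun p _ => ?_
    rw [F_apply, if_neg h, mul_zero, mul_zero]

lemma count_sum (k l : ZMod d) (x : ℂ) :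
    ∑ q : ZMod (2 * d), (if k = -l + ((q.val : ℕ) : ZMod d) then x else 0) = 2 * x := by
  haveI : NeZero (2 * d) := ⟨by have := NeZero.ne d; omega⟩
  rw [sum_zmod_val (2 * d) (fun i => if k = -l + ((i : ℕ) : ZMod d) then x else 0),
    two_mul, Finset.sum_range_add]
  have hsingle : ∑ i ∈ Finset.range d, (fun i : ℕ => if k = -l + ((i : ℕ) : ZMod d) then x else 0) i = x := by
    rw [← sum_zmod_val d (fun i => if k = -l + ((i : ℕ) : ZMod d) then x else 0)]
    have : ∀ r : ZMod d, (if k = -l + ((r.val : ℕ) : ZMod d) then x else 0)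
        = (if r = k + l then x else 0) := by
      intro r
      rw [val_natCast_zmod]
      exact if_congr ⟨fun hh => by linear_combination -hh, fun hh => by linear_combination -hh⟩
        rfl rfl
    rw [Finset.sum_congr rfl fun r _ => this r,
      Finset.sum_ite_eq' Finset.univ (k + l) (fun _ => x), if_pos (Finset.mem_univ _)]
  have hshift : ∀ i : ℕ, (fun i : ℕ => if k = -l + ((i : ℕ) : ZMod d) then x else 0) (d + i)
      = (fun i : ℕ => if k = -l + ((i : ℕ) : ZMod d) then x else 0) i := by
    intro i
    simp only []
    congr 1
    push_cast
    simp
  rw [Finset.sum_congr rfl fun i _ => hshift i, hsingle]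
  ring

lemma reconstruction (A : Matrix (ZMod d) (ZMod d) ℂ) :
    A = ∑ qp : ZMod (2 * d) × ZMod (2 * d),
      Matrix.trace (leonhardtF d qp.1 qp.2 * A) • ((4 * (d : ℂ) ^ 3) • leonhardtF d qp.1 qp.2) := by
  refine Matrix.ext fun k l => ?_
  rw [Matrix.sum_apply]
  simp only [Matrix.smul_apply, smul_eq_mul]
  rw [Fintype.sum_prod_type]
  calc A k l = ∑ q : ZMod (2 * d), (if k = -l + ((q.val : ℕ) : ZMod d) then (2 : ℂ)⁻¹ * A k l else 0) := by
        rw [count_sum]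
        ring
    _ = _ := by
        refine Finset.sum_congr rfl fun q _ => ?_
        rw [← innerSumF]

lemma dpos : 1 ≤ d := Nat.one_le_iff_ne_zero.mpr (NeZero.ne d)

lemma pauliX_pow_d : pauliX d ^ d = 1 := by
  refine Matrix.ext fun k l => ?_
  rw [pauliX_pow_apply, Matrix.one_apply, ZMod.natCast_self, add_zero]

lemma val_d_2d : ((d : ZMod (2 * d))).val = d := by
  rw [ZMod.val_natCast]
  exact Nat.mod_eq_of_lt (by have := dpos d; omega)

lemma val_one_2d : ((1 : ZMod (2 * d))).val = 1 := by
  haveI : Fact (1 < 2 * d) := ⟨by have := dpos d; omega⟩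
  exact ZMod.val_one _

lemma F_rel : leonhardtF d (d : ZMod (2 * d)) 1 = - leonhardtF d 0 1 := by
  rw [leonhardtF, leonhardtF, val_d_2d, val_one_2d, ZMod.val_zero, pauliX_pow_d, pow_zero]
  rw [show (Real.pi * Complex.I * (d : ℕ) * (1 : ℕ) / d : ℂ) = Real.pi * Complex.I by
    have hd := hd0 d
    push_cast
    field_simp]
  rw [show (Real.pi * Complex.I * (0 : ℕ) * (1 : ℕ) / d : ℂ) = 0 by push_cast; ring]
  rw [Complex.exp_pi_mul_I, Complex.exp_zero, mul_one, mul_neg_one, neg_smul]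

lemma trace_F_real (q p : ZMod (2 * d)) (A : Matrix (ZMod d) (ZMod d) ℂ) (hA : A.IsHermitian) :
    ((Matrix.trace (leonhardtF d q p * A)).re : ℂ) = Matrix.trace (leonhardtF d q p * A) := by
  have hst : star (Matrix.trace (leonhardtF d q p * A)) = Matrix.trace (leonhardtF d q p * A) := by
    rw [← Matrix.trace_conjTranspose, Matrix.conjTranspose_mul, hA.eq,
      (F_isHermitian d q p).eq, Matrix.trace_mul_comm]
  exact Complex.conj_eq_iff_re.mp hst

lemma d_ne_zero_zmod : ((d : ZMod (2 * d))) ≠ 0 := by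
  intro h0
  have := congrArg ZMod.val h0
  rw [val_d_2d, ZMod.val_zero] at this
  exact NeZero.ne d this

lemma coe_smul_matrix (r : ℝ) (M : Matrix (ZMod d) (ZMod d) ℂ) : ((r : ℂ)) • M = r • M := by
  rw [← smul_one_smul ℂ r M]
  norm_num [Complex.real_smul]

theorem stmt14 (d : ℕ) [NeZero d] (heven : Even d) :
    (∀ q p : ZMod (2 * d), (leonhardtF d q p).IsHermitian) ∧
    (∀ A : Matrix (ZMod d) (ZMod d) ℂ, A.IsHermitian →
      A ∈ Submodule.span ℝ
        (Set.range fun qp : ZMod (2 * d) × ZMod (2 * d) => leonhardtF d qp.1 qp.2)) ∧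
    ¬ LinearIndependent ℝ
        (fun qp : ZMod (2 * d) × ZMod (2 * d) => leonhardtF d qp.1 qp.2) ∧
    ∃ E E' : ZMod (2 * d) × ZMod (2 * d) → Matrix (ZMod d) (ZMod d) ℂ,
      E ≠ E' ∧
      (∀ A : Matrix (ZMod d) (ZMod d) ℂ, A.IsHermitian →
        A = ∑ qp : ZMod (2 * d) × ZMod (2 * d),
          Matrix.trace (leonhardtF d qp.1 qp.2 * A) • E qp) ∧
      (∀ A : Matrix (ZMod d) (ZMod d) ℂ, A.IsHermitian →
        A = ∑ qp : ZMod (2 * d) × ZMod (2 * d),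
          Matrix.trace (leonhardtF d qp.1 qp.2 * A) • E' qp) := by
  have hne : ((0 : ZMod (2 * d)), (1 : ZMod (2 * d))) ≠ ((d : ZMod (2 * d)), 1) := by
    intro hc
    exact d_ne_zero_zmod d ((Prod.ext_iff.mp hc).1.symm)
  refine ⟨F_isHermitian d, ?_, ?_, ?_⟩
  · -- span
    intro A hA
    rw [reconstruction d A]
    refine Submodule.sum_mem _ fun qp _ => ?_
    have hcoef : Matrix.trace (leonhardtF d qp.1 qp.2 * A) • ((4 * (d : ℂ) ^ 3) • leonhardtF d qp.1 qp.2)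
        = ((4 * (d : ℝ) ^ 3 * (Matrix.trace (leonhardtF d qp.1 qp.2 * A)).re : ℝ)) • leonhardtF d qp.1 qp.2 := by
      rw [smul_smul, ← coe_smul_matrix]
      congr 1
      rw [← trace_F_real d qp.1 qp.2 A hA]
      push_cast
      rw [Complex.ofReal_re]
      ring
    rw [hcoef]
    exact Submodule.smul_mem _ _ (Submodule.subset_span ⟨qp, rfl⟩)
  · -- not linear independent
    rw [Fintype.not_linearIndependent_iff]
    refine ⟨fun qp => (if qp = ((0 : ZMod (2 * d)), (1 : ZMod (2 * d))) then (1:ℝ) else 0)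
      + (if qp = ((d : ZMod (2 * d)), (1 : ZMod (2 * d))) then (1:ℝ) else 0), ?_, ?_⟩
    · rw [Finset.sum_congr rfl (fun qp _ => add_smul _ _ _), Finset.sum_add_distrib]
      have h1 : ∀ c : ZMod (2 * d) × ZMod (2 * d),
          ∑ qp : ZMod (2 * d) × ZMod (2 * d),
            (if qp = c then (1:ℝ) else 0) • leonhardtF d qp.1 qp.2 = leonhardtF d c.1 c.2 := by
        intro c
        rw [Finset.sum_congr rfl (fun qp _ => by
          rw [ite_smul, one_smul, zero_smul] :
            ∀ qp ∈ Finset.univ, (if qp = c then (1:ℝ) else 0) • leonhardtF d qp.1 qp.2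
              = if qp = c then leonhardtF d qp.1 qp.2 else 0),
          Finset.sum_ite_eq' Finset.univ c (fun qp => leonhardtF d qp.1 qp.2),
          if_pos (Finset.mem_univ _)]
      rw [h1, h1]
      rw [F_rel]
      simp
    · exact ⟨((0 : ZMod (2 * d)), (1 : ZMod (2 * d))), by simp [hne]⟩
  · -- duals
    set t : (ZMod (2 * d) × ZMod (2 * d)) → Matrix (ZMod d) (ZMod d) ℂ → ℂ :=
      fun qp A => Matrix.trace (leonhardtF d qp.1 qp.2 * A) with ht
    refine ⟨fun qp => (4 * (d : ℂ) ^ 3) • leonhardtF d qp.1 qp.2,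
      fun qp => (4 * (d : ℂ) ^ 3) • leonhardtF d qp.1 qp.2
        + ((if qp = ((0 : ZMod (2 * d)), (1 : ZMod (2 * d))) then (1 : Matrix (ZMod d) (ZMod d) ℂ) else 0)
          + (if qp = ((d : ZMod (2 * d)), (1 : ZMod (2 * d))) then (1 : Matrix (ZMod d) (ZMod d) ℂ) else 0)),
      ?_, ?_, ?_⟩
    · intro hEE'
      have := congrFun hEE' ((0 : ZMod (2 * d)), (1 : ZMod (2 * d)))
      rw [if_pos rfl, if_neg hne, add_zero] at this
      have h10 : (1 : Matrix (ZMod d) (ZMod d) ℂ) = 0 := by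
        have := (left_eq_add).mp this
        exact this
      have := congrFun (congrFun h10 0) 0
      rw [Matrix.one_apply_eq, Matrix.zero_apply] at this
      exact one_ne_zero this
    · intro A _
      exact reconstruction d A
    · intro A _
      have hsplit : ∀ qp : ZMod (2 * d) × ZMod (2 * d),
          Matrix.trace (leonhardtF d qp.1 qp.2 * A) •
            ((4 * (d : ℂ) ^ 3) • leonhardtF d qp.1 qp.2
              + ((if qp = ((0 : ZMod (2 * d)), (1 : ZMod (2 * d))) then (1 : Matrix (ZMod d) (ZMod d) ℂ) else 0)
                + (if qp = ((d : ZMod (2 * d)), (1 : ZMod (2 * d))) then (1 : Matrix (ZMod d) (ZMod d) ℂ) else 0)))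
          = Matrix.trace (leonhardtF d qp.1 qp.2 * A) • ((4 * (d : ℂ) ^ 3) • leonhardtF d qp.1 qp.2)
            + ((if qp = ((0 : ZMod (2 * d)), (1 : ZMod (2 * d))) then
                  Matrix.trace (leonhardtF d qp.1 qp.2 * A) • (1 : Matrix (ZMod d) (ZMod d) ℂ) else 0)
              + (if qp = ((d : ZMod (2 * d)), (1 : ZMod (2 * d))) then
                  Matrix.trace (leonhardtF d qp.1 qp.2 * A) • (1 : Matrix (ZMod d) (ZMod d) ℂ) else 0)) := by
        intro qp
        rw [smul_add, smul_add]
        congr 1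
        congr 1 <;> · rw [smul_ite, smul_zero]
      rw [Finset.sum_congr rfl fun qp _ => hsplit qp, Finset.sum_add_distrib, Finset.sum_add_distrib]
      rw [Finset.sum_ite_eq' Finset.univ ((0 : ZMod (2 * d)), (1 : ZMod (2 * d)))
          (fun qp => Matrix.trace (leonhardtF d qp.1 qp.2 * A) • (1 : Matrix (ZMod d) (ZMod d) ℂ)),
        Finset.sum_ite_eq' Finset.univ ((d : ZMod (2 * d)), (1 : ZMod (2 * d)))
          (fun qp => Matrix.trace (leonhardtF d qp.1 qp.2 * A) • (1 : Matrix (ZMod d) (ZMod d) ℂ)),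
        if_pos (Finset.mem_univ _), if_pos (Finset.mem_univ _)]
      have hcancel : Matrix.trace (leonhardtF d 0 1 * A) • (1 : Matrix (ZMod d) (ZMod d) ℂ)
          + Matrix.trace (leonhardtF d (d : ZMod (2 * d)) 1 * A) • (1 : Matrix (ZMod d) (ZMod d) ℂ) = 0 := by
        rw [F_rel, Matrix.neg_mul, Matrix.trace_neg, ← add_smul, add_neg_cancel, zero_smul]
      rw [hcancel, add_zero]
      exact reconstruction d A
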